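/- Let (V, θ, h) be a decoupled harmonic bundle on a Riemann surface, with spectral curve decomposing into connected components Σ = ⊔_{i∈Λ} Σ_i. Then the corresponding Higgs bundle decomposition (V,θ) = ⊕_{i∈Λ}(V_i, θ_i) with Σ_{V_i,θ_i} = Σ_i is orthogonal with respect to h. -/

import Mathlib

open Matrix
open scoped ComplexOrder

/-- A system of `r` holomorphic sections over `U` enumerating, without repetition, the
fibers of the spectral covering `S ⊆ Y × ℂ ⊆ T*Y` (first coordinate: base point, second
coordinate: eigenvalue of the Higgs field).  Injectivity of `i ↦ s i z` encodes regular
semisimplicity. -/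
def IsSectionSystem (r : ℕ) (S : Set (ℂ × ℂ)) (U : Set ℂ) (s : Fin r → ℂ → ℂ) : Prop :=
  (∀ i, DifferentiableOn ℂ (s i) U) ∧
  (∀ i, ∀ z ∈ U, (z, s i z) ∈ S) ∧
  (∀ z ∈ U, ∀ q ∈ S, q.1 = z → ∃ i, q = (z, s i z)) ∧
  (∀ z ∈ U, Function.Injective fun i => s i z)

/-- The Gram matrix of a Hermitian pairing `h` on `V = π_*L` in the local holomorphic
frame given by a section system. -/
noncomputable def gramMatrix (r : ℕ) (h : ℂ × ℂ → ℂ × ℂ → ℂ) (s : Fin r → ℂ → ℂ)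
    (z : ℂ) : Matrix (Fin r) (Fin r) ℂ :=
  Matrix.of fun i j => h (z, s i z) (z, s j z)

/-- Flatness of the Chern connection of `h` on `U`: locally the Gram matrix is
`Gᴴ·G` with `G` holomorphic and invertible, i.e. `R(h) = 0`. -/
def IsFlatGram (r : ℕ) (h : ℂ × ℂ → ℂ × ℂ → ℂ) (s : Fin r → ℂ → ℂ) (U : Set ℂ) : Prop :=
  ∀ z ∈ U, ∃ V ∈ nhds z, ∃ G : ℂ → Matrix (Fin r) (Fin r) ℂ,
    (∀ i j, DifferentiableOn ℂ (fun w => G w i j) (V ∩ U)) ∧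
    ∀ w ∈ V ∩ U, IsUnit (G w).det ∧ gramMatrix r h s w = (G w)ᴴ * G w

/-- `h` is a decoupled harmonic metric: in every local holomorphic eigenframe the Gram
matrix `M` is positive definite, `R(h) = 0`, and `[θ, θ†_h] = 0` where
`θ = diag(eigenvalues)` and `θ†_h = M⁻¹·Dᴴ·M`. -/
def IsDecoupledHarmonicMetric (r : ℕ) (S : Set (ℂ × ℂ)) (Y : Set ℂ)
    (h : ℂ × ℂ → ℂ × ℂ → ℂ) : Prop :=
  ∀ U : Set ℂ, IsOpen U → U ⊆ Y → ∀ s : Fin r → ℂ → ℂ, IsSectionSystem r S U s →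
    (∀ z ∈ U, (gramMatrix r h s z).PosDef) ∧
    IsFlatGram r h s U ∧
    (∀ z ∈ U,
      Matrix.diagonal (fun i => s i z) *
        ((gramMatrix r h s z)⁻¹ * (Matrix.diagonal fun i => s i z)ᴴ * gramMatrix r h s z)
      = ((gramMatrix r h s z)⁻¹ * (Matrix.diagonal fun i => s i z)ᴴ * gramMatrix r h s z) *
          Matrix.diagonal (fun i => s i z))

/-- Let `(V, θ, h)` be a decoupled harmonic bundle, with spectral curve `S` decomposing
into connected components `S = ⊔ S_i`.  The corresponding decomposition of the Higgs
bundle `(V, θ) = ⊕ (V_i, θ_i)` is orthogonal with respect to `h`: for any two points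
`q, q'` of `S` in the same fiber of the spectral covering but in different connected
components of `S`, `h(q, q') = 0`. -/
theorem stmt16 (r : ℕ) (hr : 0 < r) (S : Set (ℂ × ℂ)) (Y : Set ℂ) (hY : IsOpen Y)
    (hS : ∀ q ∈ S, q.1 ∈ Y)
    (hcov : ∀ y ∈ Y, ∃ U : Set ℂ, IsOpen U ∧ y ∈ U ∧ U ⊆ Y ∧
      ∃ s : Fin r → ℂ → ℂ, IsSectionSystem r S U s)
    (h : ℂ × ℂ → ℂ × ℂ → ℂ)
    (hherm : ∀ q q', h q q' = starRingEnd ℂ (h q' q))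
    (hdec : IsDecoupledHarmonicMetric r S Y h) :
    ∀ q ∈ S, ∀ q' ∈ S, q.1 = q'.1 →
      connectedComponentIn S q ≠ connectedComponentIn S q' → h q q' = 0 := by
  intro q hq q' hq' hfib hcomp
  obtain ⟨U, hUopen, hzU, hUY, s, hsys⟩ := hcov q.1 (hS q hq)
  obtain ⟨hpos, hflat, hcomm⟩ := hdec U hUopen hUY s hsys
  obtain ⟨i, hi⟩ := hsys.2.2.1 q.1 hzU q hq rfl
  obtain ⟨j, hj⟩ := hsys.2.2.1 q.1 hzU q' hq' hfib.symm
  have hij : i ≠ j := by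
    rintro rfl
    exact hcomp (by rw [hi, hj])
  have hsij : s i q.1 ≠ s j q.1 := fun hsij => hij (hsys.2.2.2 q.1 hzU hsij)
  set z := q.1 with hz
  set M := gramMatrix r h s z with hM
  set D : Matrix (Fin r) (Fin r) ℂ := Matrix.diagonal (fun i => s i z) with hD
  have hMpos := hpos z hzU
  have hdet : IsUnit M.det := hMpos.det_pos.ne'.isUnit
  set C : Matrix (Fin r) (Fin r) ℂ := M⁻¹ * Dᴴ * M with hC
  have hcom : D * C = C * D := hcomm z hzU
  -- C is diagonal
  have hCdiag : ∀ a b, a ≠ b → C a b = 0 := by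
    intro a b hab
    have hab' : s a z ≠ s b z := fun e => hab (hsys.2.2.2 z hzU e)
    have := congrFun (congrFun hcom a) b
    rw [Matrix.diagonal_mul, Matrix.mul_diagonal] at this
    have : (s a z - s b z) * C a b = 0 := by ring_nf; linear_combination this
    rcases mul_eq_zero.1 this with h0 | h0
    · exact absurd (sub_eq_zero.1 h0) hab'
    · exact h0
  -- M * C = Dᴴ * M
  have hMC : M * C = Dᴴ * M := by
    rw [hC, ← Matrix.mul_assoc, ← Matrix.mul_assoc, Matrix.mul_nonsing_inv _ hdet,
      Matrix.one_mul]
  have hDH : Dᴴ = Matrix.diagonal (fun i => starRingEnd ℂ (s i z)) := by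
    rw [hD, Matrix.diagonal_conjTranspose]
    rfl
  have hkey : ∀ a b : Fin r, starRingEnd ℂ (s a z) * M a b = M a b * C b b := by
    intro a b
    have := congrFun (congrFun hMC a) b
    rw [hDH, Matrix.diagonal_mul] at this
    rw [← this, Matrix.mul_apply]
    rw [Finset.sum_eq_single b]
    · intro k _ hk
      rw [hCdiag k b hk, mul_zero]
    · intro hb
      exact absurd (Finset.mem_univ b) hb
  -- diagonal entries of M are nonzero
  have hMdiag : ∀ b : Fin r, M b b ≠ 0 := by
    intro b hb0
    have hx : (Pi.single b 1 : Fin r → ℂ) ≠ 0 := by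
      intro hx
      have := congrFun hx b
      simp at this
    have := hMpos.dotProduct_mulVec_pos hx
    have heval : star (Pi.single b 1 : Fin r → ℂ) ⬝ᵥ M *ᵥ Pi.single b 1 = M b b := by
      simp [dotProduct, Matrix.mulVec, Pi.single_apply, Finset.sum_ite_eq]
    rw [heval, hb0] at this
    exact lt_irrefl _ this
  have hCbb : C j j = starRingEnd ℂ (s j z) := by
    have h1 := hkey j j
    have h2 : M j j * C j j = M j j * starRingEnd ℂ (s j z) := by
      rw [← h1, mul_comm]
    exact mul_left_cancel₀ (hMdiag j) h2
  have hfin : M i j = 0 := by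
    have := hkey i j
    rw [hCbb] at this
    have h2 : M i j * (starRingEnd ℂ (s i z) - starRingEnd ℂ (s j z)) = 0 := by
      ring_nf
      linear_combination this
    rcases mul_eq_zero.1 h2 with h0 | h0
    · exact h0
    · exact absurd ((starRingEnd ℂ).injective (sub_eq_zero.1 h0)) hsij
  have : h q q' = M i j := by
    rw [hi, hj]
    rfl
  rw [this, hfin]
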